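/- A finite game is an exact potential game if and only if for every player i and every 4-cycle of strategy profiles a → b → c → d → a, where a,b differ only in player i's strategy, b,c differ only in player j's strategy, c,d differ only in player i's strategy, and d,a differ only in player j's strategy (i ≠ j), the sum of cost differences around the cycle vanishes: (J_i(b) − J_i(a)) + (J_j(c) − J_j(b)) + (J_i(d) − J_i(c)) + (J_j(a) − J_j(d)) = 0. -/

import Mathlib

section MS
variable {N : Type} [DecidableEq N] {A : N → Type}

/-- Update base `b` at coordinates in `L` to the values of `a`. -/
def MSupd : List N → (∀ i, A i) → (∀ i, A i) → (∀ i, A i)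
  | [], b, _ => b
  | i :: t, b, a => MSupd t (Function.update b i (a i)) a

lemma MSupd_not_mem {L : List N} {j : N} (h : j ∉ L) (b a : ∀ i, A i) :
    MSupd L b a j = b j := by
  induction L generalizing b with
  | nil => rfl
  | cons i t ih =>
    simp only [List.mem_cons, not_or] at h
    rw [MSupd, ih h.2, Function.update_of_ne h.1]

lemma MSupd_mem {L : List N} {j : N} (h : j ∈ L) (b a : ∀ i, A i) :
    MSupd L b a j = a j := by
  induction L generalizing b with
  | nil => simp at h
  | cons i t ih =>
    rw [MSupd]
    by_cases hj : j ∈ t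
    · exact ih hj _
    · have : j = i := by rcases List.mem_cons.mp h with h | h; exact h; exact absurd h hj
      subst this
      rw [MSupd_not_mem hj, Function.update_self]

lemma MSupd_cons (i : N) (t : List N) (b a : ∀ i, A i) :
    MSupd (i :: t) b a = MSupd t (Function.update b i (a i)) a := rfl

/-- Sum of cost changes along the path updating `b` to `a`'s values on `L`. -/
def MSF (J : N → (∀ i, A i) → ℝ) : List N → (∀ i, A i) → (∀ i, A i) → ℝ
  | [], _, _ => 0
  | i :: t, b, a =>
      (J i (Function.update b i (a i)) - J i b) + MSF J t (Function.update b i (a i)) a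

lemma MSF_cons (J : N → (∀ i, A i) → ℝ) (i : N) (t : List N) (b a : ∀ i, A i) :
    MSF J (i :: t) b a
      = (J i (Function.update b i (a i)) - J i b) + MSF J t (Function.update b i (a i)) a := rfl

lemma MSupd_target_congr {L : List N} {a a' : ∀ i, A i} (h : ∀ j ∈ L, a j = a' j)
    (b : ∀ i, A i) : MSupd L b a = MSupd L b a' := by
  induction L generalizing b with
  | nil => rfl
  | cons i t ih =>
    rw [MSupd, MSupd, h i (by simp), ih fun j hj => h j (by simp [hj])]

lemma MSF_target_congr (J : N → (∀ i, A i) → ℝ) {L : List N} {a a' : ∀ i, A i}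
    (h : ∀ j ∈ L, a j = a' j) (b : ∀ i, A i) : MSF J L b a = MSF J L b a' := by
  induction L generalizing b with
  | nil => rfl
  | cons i t ih =>
    rw [MSF, MSF, h i (by simp), ih fun j hj => h j (by simp [hj])]

lemma MSF_append (J : N → (∀ i, A i) → ℝ) (L1 L2 : List N) (b a : ∀ i, A i) :
    MSF J (L1 ++ L2) b a = MSF J L1 b a + MSF J L2 (MSupd L1 b a) a := by
  induction L1 generalizing b with
  | nil => simp [MSF, MSupd]
  | cons i t ih => simp only [List.cons_append, MSF, MSupd, List.append_eq, ih]; ring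

/-- Key lemma: if `i ∉ L`, then the cycle condition implies that shifting the base
at coordinate `i` changes the path sum by the difference of the `Δ` values. -/
lemma MSF_base_shift (J : N → (∀ i, A i) → ℝ)
    (hc : ∀ (i j : N), i ≠ j → ∀ (a : ∀ i, A i) (x : A i) (y : A j),
      (J i (Function.update a i x) - J i a)
      + (J j (Function.update (Function.update a i x) j y)
          - J j (Function.update a i x))
      + (J i (Function.update (Function.update (Function.update a i x) j y) i (a i))
          - J i (Function.update (Function.update a i x) j y))
      + (J j a
          - J j (Function.update (Function.update (Function.update a i x) j y) i (a i)))
      = 0)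
    {i : N} (x' : A i) {L : List N} (hiL : i ∉ L) (b a : ∀ i, A i) :
    MSF J L b a - MSF J L (Function.update b i x') a
      = (J i (MSupd L b a) - J i (Function.update (MSupd L b a) i x'))
        - (J i b - J i (Function.update b i x')) := by
  induction L generalizing b with
  | nil => simp [MSF, MSupd]
  | cons j t ih =>
    simp only [List.mem_cons, not_or] at hiL
    obtain ⟨hij, hit⟩ := hiL
    set b' := Function.update b i x' with hb'
    set c := Function.update b j (a j) with hcdef
    have hcomm : Function.update b' j (a j) = Function.update c i x' := by
      rw [hb', hcdef, Function.update_comm (Ne.symm hij)]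
    have hcyc := hc i j hij b' (b i) (a j)
    have e1 : Function.update b' i (b i) = b := by
      rw [hb', Function.update_idem, Function.update_eq_self]
    rw [e1] at hcyc
    have e2 : Function.update (Function.update b j (a j)) i (b' i) =
        Function.update c i x' := by
      rw [hcdef, hb', Function.update_self]
    rw [e2] at hcyc
    -- hcyc : (J i b - J i b') + (J j c - J j b) + (J i (update c i x') - J i c)
    --        + (J j b' - J j (update c i x')) = 0
    have ihc := ih hit c
    rw [MSF_cons, MSF_cons, hcomm]
    rw [← hcdef] at hcyc ⊢
    have hms : MSupd (j :: t) b a = MSupd t c a := by rw [MSupd_cons, ← hcdef]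
    rw [hms]
    linarith [ihc, hcyc]

end MS

/-- Monderer–Shapley 4-cycle characterization: a finite game is
an exact potential game iff every two-player 4-cycle of unilateral deviations
has zero total cost change. -/
theorem potential_iff_four_cycle_condition
    {N : Type} [Fintype N] [DecidableEq N]
    (A : N → Type) [∀ i, Fintype (A i)]
    (J : N → (∀ i, A i) → ℝ) :
    (∃ F : (∀ i, A i) → ℝ,
      ∀ (i : N) (a : ∀ i, A i) (a' : A i),
        J i a - J i (Function.update a i a') = F a - F (Function.update a i a')) ↔
    (∀ (i j : N), i ≠ j → ∀ (a : ∀ i, A i) (x : A i) (y : A j),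
      let b := Function.update a i x
      let c := Function.update b j y
      let d := Function.update c i (a i)
      (J i b - J i a) + (J j c - J j b) + (J i d - J i c) + (J j a - J j d) = 0) := by
  constructor
  · rintro ⟨F, hF⟩ i j hij a x y
    intro b c d
    have hba : Function.update b i (a i) = a := by
      show Function.update (Function.update a i x) i (a i) = a
      rw [Function.update_idem, Function.update_eq_self]
    have hcb : Function.update c j (b j) = b := by
      show Function.update (Function.update b j y) j (b j) = b
      rw [Function.update_idem, Function.update_eq_self]
    have hdc : Function.update d i (c i) = c := by
      show Function.update (Function.update c i (a i)) i (c i) = c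
      rw [Function.update_idem, Function.update_eq_self]
    have hd : d = Function.update a j y := by
      funext k
      show Function.update (Function.update (Function.update a i x) j y) i (a i) k
          = Function.update a j y k
      by_cases hki : k = i
      · subst hki
        rw [Function.update_self, Function.update_of_ne hij]
      · rw [Function.update_of_ne hki]
        by_cases hkj : k = j
        · subst hkj; rw [Function.update_self, Function.update_self]
        · rw [Function.update_of_ne hkj, Function.update_of_ne hki,
            Function.update_of_ne hkj]
    have had : Function.update a j (d j) = d := by
      rw [hd, Function.update_self]
    have h1 := hF i b (a i); rw [hba] at h1
    have h2 := hF j c (b j); rw [hcb] at h2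
    have h3 := hF i d (c i); rw [hdc] at h3
    have h4 := hF j a (d j); rw [had] at h4
    linarith
  · intro hc
    have hc' : ∀ (i j : N), i ≠ j → ∀ (a : ∀ i, A i) (x : A i) (y : A j),
        (J i (Function.update a i x) - J i a)
        + (J j (Function.update (Function.update a i x) j y)
            - J j (Function.update a i x))
        + (J i (Function.update (Function.update (Function.update a i x) j y) i (a i))
            - J i (Function.update (Function.update a i x) j y))
        + (J j a
            - J j (Function.update (Function.update (Function.update a i x) j y) i (a i)))
        = 0 := fun i j hij a x y => hc i j hij a x y
    rcases isEmpty_or_nonempty (∀ i, A i) with he | hne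
    · exact ⟨fun _ => 0, fun i a => (he.false a).elim⟩
    obtain ⟨a0⟩ := hne
    set L : List N := Finset.univ.toList with hL
    have hnd : L.Nodup := Finset.nodup_toList _
    have hmem : ∀ j : N, j ∈ L := fun j => by simp [hL]
    refine ⟨fun a => MSF J L a0 a, fun i a a' => ?_⟩
    set a₂ := Function.update a i a' with ha2
    obtain ⟨L1, L2, hsplit⟩ := List.append_of_mem (hmem i)
    have hnd' : (L1 ++ i :: L2).Nodup := hsplit ▸ hnd
    have hdisj := (List.nodup_append'.mp hnd')
    have hi1 : i ∉ L1 := fun h => hdisj.2.2 h List.mem_cons_self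
    have hi2 : i ∉ L2 := by
      have := hdisj.2.1
      simp only [List.nodup_cons] at this
      exact this.1
    have hagree : ∀ j, j ≠ i → a j = a₂ j := by
      intro j hj; rw [ha2, Function.update_of_ne hj]
    have hag1 : ∀ j ∈ L1, a j = a₂ j := fun j hj => hagree j (by rintro rfl; exact hi1 hj)
    have hag2 : ∀ j ∈ L2, a j = a₂ j := fun j hj => hagree j (by rintro rfl; exact hi2 hj)
    set b1 := MSupd L1 a0 a with hb1
    have hb1' : MSupd L1 a0 a₂ = b1 := (MSupd_target_congr hag1 a0).symm
    set c := Function.update b1 i (a i) with hcdef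
    set c' := Function.update b1 i a' with hc'def
    have hcc' : c' = Function.update c i a' := by rw [hcdef, hc'def, Function.update_idem]
    have ha2i : a₂ i = a' := by rw [ha2, Function.update_self]
    -- expand F a and F a₂
    show J i a - J i a₂ = MSF J L a0 a - MSF J L a0 a₂
    rw [hsplit, MSF_append, MSF_append, MSF_cons, MSF_cons, hb1',
      MSF_target_congr J hag1 a0, ← hb1, ← hcdef, ha2i, ← hc'def,
      ← MSF_target_congr J hag2 c']
    have key := MSF_base_shift J hc' a' hi2 c a
    rw [← hcc'] at key
    have hfin : MSupd L2 c a = a := by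
      funext k
      by_cases hk : k ∈ L2
      · exact MSupd_mem hk _ _
      · rw [MSupd_not_mem hk, hcdef]
        by_cases hki : k = i
        · subst hki; rw [Function.update_self]
        · rw [Function.update_of_ne hki, hb1]
          have hk1 : k ∈ L1 := by
            have := hmem k
            rw [hsplit] at this
            simp only [List.mem_append, List.mem_cons] at this
            tauto
          exact MSupd_mem hk1 _ _
    rw [hfin] at key
    linarith [key]
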